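/- Let p ≥ 2 and define the cone 𝓑_p of real symmetric p×p matrices B such that for every index i, the submatrix of B obtained by deleting row i and column i is positive semidefinite. Then B ∈ 𝓑_p if and only if for every matrix A in the convex cone 𝓐_p generated by matrices x xᵀ with x ∈ ℝ^p having at least one zero coordinate, Tr(A B) ≥ 0. -/

import Mathlib

open Matrix

/-- Membership in the cone `𝓐_p`: the conical hull of matrices `x xᵀ` where
`x` has at least one zero coordinate. -/
def memA {p : ℕ} (A : Matrix (Fin p) (Fin p) ℝ) : Prop :=
  ∃ (r : ℕ) (c : Fin r → ℝ) (x : Fin r → Fin p → ℝ),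
    (∀ i, 0 ≤ c i) ∧ (∀ i, ∃ j, x i j = 0) ∧
    A = ∑ i, c i • vecMulVec (x i) (x i)

lemma sum_ext_aux {p : ℕ} (i : Fin p) (f : Fin p → ℝ) (hf : f i = 0) :
    ∑ j, f j = ∑ j : {j : Fin p // j ≠ i}, f (j : Fin p) := by
  classical
  rw [Fintype.sum_eq_add_sum_compl i, hf, zero_add]
  exact Finset.sum_subtype _ (fun x => by simp) _

/-- Trace of `x xᵀ * B` is the quadratic form. -/
lemma trace_vecMulVec_mul {p : ℕ} (x : Fin p → ℝ) (B : Matrix (Fin p) (Fin p) ℝ) :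
    Matrix.trace (vecMulVec x x * B) = x ⬝ᵥ B *ᵥ x := by
  simp only [Matrix.trace, Matrix.diag, Matrix.mul_apply, vecMulVec_apply,
    dotProduct, mulVec, dotProduct]
  rw [Finset.sum_comm]
  apply Finset.sum_congr rfl
  intro b _
  rw [Finset.mul_sum]
  apply Finset.sum_congr rfl
  intro a _
  ring

/-- Quadratic form of the extension equals quadratic form of the submatrix. -/
lemma quad_ext {p : ℕ} (i : Fin p) (B : Matrix (Fin p) (Fin p) ℝ) (x : Fin p → ℝ)
    (hx : x i = 0) :
    x ⬝ᵥ B *ᵥ x =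
      (fun j : {j : Fin p // j ≠ i} => x (j : Fin p)) ⬝ᵥ
        (B.submatrix (fun j : {j : Fin p // j ≠ i} => (j : Fin p))
          (fun j : {j : Fin p // j ≠ i} => (j : Fin p))) *ᵥ
        (fun j : {j : Fin p // j ≠ i} => x (j : Fin p)) := by
  simp only [dotProduct, mulVec, dotProduct, submatrix_apply]
  rw [sum_ext_aux i _ (by simp [hx])]
  apply Finset.sum_congr rfl
  intro j _
  congr 1
  exact sum_ext_aux i _ (by simp [hx])

/-- `B ∈ 𝓑_p` (all principal submatrices of size `p-1` are PSD) iff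
`Tr(A B) ≥ 0` for every `A` in the cone `𝓐_p`. -/
theorem memB_iff_trace_nonneg {p : ℕ} (hp : 2 ≤ p)
    (B : Matrix (Fin p) (Fin p) ℝ) (hB : B.IsSymm) :
    (∀ i : Fin p,
      (B.submatrix (fun j : {j : Fin p // j ≠ i} => (j : Fin p))
        (fun j : {j : Fin p // j ≠ i} => (j : Fin p))).PosSemidef) ↔
    (∀ A : Matrix (Fin p) (Fin p) ℝ, memA A → 0 ≤ Matrix.trace (A * B)) := by
  constructor
  · rintro h A ⟨r, c, x, hc, hx, rfl⟩
    rw [Finset.sum_mul, Matrix.trace_sum]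
    apply Finset.sum_nonneg
    intro k _
    rw [Matrix.smul_mul, Matrix.trace_smul, smul_eq_mul]
    apply mul_nonneg (hc k)
    rw [trace_vecMulVec_mul]
    obtain ⟨j, hj⟩ := hx k
    rw [quad_ext j B (x k) hj]
    simpa using (h j).dotProduct_mulVec_nonneg (fun j' : {j' : Fin p // j' ≠ j} => x k (j' : Fin p))
  · intro h i
    rw [posSemidef_iff_dotProduct_mulVec]
    constructor
    · ext a b
      simp only [IsHermitian, conjTranspose_apply, submatrix_apply, star_trivial]
      conv_lhs => rw [← hB]
      rfl
    · intro y
      set x : Fin p → ℝ := fun j => if h : j = i then 0 else y ⟨j, h⟩ with hxdef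
      have hxi : x i = 0 := by simp [hxdef]
      have hy : (fun j : {j : Fin p // j ≠ i} => x (j : Fin p)) = y := by
        funext j
        simp [hxdef, j.2]
      have := h (vecMulVec x x) ⟨1, fun _ => 1, fun _ => x, fun _ => zero_le_one,
        fun _ => ⟨i, hxi⟩, by simp⟩
      rw [trace_vecMulVec_mul, quad_ext i B x hxi, hy] at this
      simpa using this
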